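/- Let A be a commutative Noetherian ring. Then the monoid ic(A) under I*J = \overline{IJ} is atomic: every integrally closed ideal I of A containing a nonzerodivisor with I != (1) can be written as I = \overline{I_1 I_2 \cdots I_k} for some k >= 1, where each I_i is a *-irreducible element of ic(A). -/

import Mathlib

/-- `x` satisfies an equation of integral dependence over the ideal `I`:
`x ^ n + a 1 * x ^ (n-1) + ⋯ + a (n-1) * x + a n = 0` with `a i ∈ I ^ i`. -/
def IsIntegralOverIdeal {A : Type*} [CommRing A] (I : Ideal A) (x : A) : Prop :=
  ∃ n : ℕ, 0 < n ∧ ∃ a : ℕ → A, (∀ i, 1 ≤ i → i ≤ n → a i ∈ I ^ i) ∧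
    x ^ n + ∑ i ∈ Finset.Icc 1 n, a i * x ^ (n - i) = 0

/-- The integral closure `\overline{I}` of an ideal `I`.  The set of elements integral
over `I` is in fact an ideal, so taking the ideal span of this set does not change it. -/
def intCl {A : Type*} [CommRing A] (I : Ideal A) : Ideal A :=
  Ideal.span {x | IsIntegralOverIdeal I x}

/-- Membership in the monoid `ic(A)`: integrally closed and contains a nonzerodivisor. -/
def MemIC {A : Type*} [CommRing A] (I : Ideal A) : Prop :=
  intCl I = I ∧ ∃ r ∈ I, r ∈ nonZeroDivisors A

/-- `*`-irreducible elements of `ic(A)`. -/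
def StarIrreducible {A : Type*} [CommRing A] (I : Ideal A) : Prop :=
  MemIC I ∧ I ≠ ⊤ ∧
    ∀ J K : Ideal A, MemIC J → MemIC K → I = intCl (J * K) → J = ⊤ ∨ K = ⊤

namespace ICAux

variable {A : Type*} [CommRing A]

/-- `x` admits a "witness" ideal `T` containing a nonzerodivisor with `xT ⊆ JT`. -/
def HW (J : Ideal A) (x : A) : Prop :=
  ∃ T : Ideal A, (∃ c ∈ T, c ∈ nonZeroDivisors A) ∧ Ideal.span {x} * T ≤ J * T

theorem hw_of_mem {M : Ideal A} {x : A} (hx : x ∈ M) : HW M x := by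
  refine ⟨⊤, ⟨1, trivial, one_mem _⟩, ?_⟩
  rw [Ideal.mul_top, Ideal.mul_top]
  exact (Ideal.span_singleton_le_iff_mem _).2 hx

theorem hw_add {J : Ideal A} {x y : A} (hx : HW J x) (hy : HW J y) : HW J (x + y) := by
  obtain ⟨T, ⟨c, hcT, hc⟩, hT⟩ := hx
  obtain ⟨U, ⟨d, hdU, hd⟩, hU⟩ := hy
  refine ⟨T * U, ⟨c * d, Ideal.mul_mem_mul hcT hdU, mul_mem hc hd⟩, ?_⟩
  have h1 : Ideal.span {x + y} ≤ Ideal.span {x} + Ideal.span {y} := by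
    rw [Ideal.span_singleton_le_iff_mem, Ideal.add_eq_sup]
    exact Submodule.add_mem_sup (Ideal.subset_span rfl) (Ideal.subset_span rfl)
  calc Ideal.span {x + y} * (T * U)
      ≤ (Ideal.span {x} + Ideal.span {y}) * (T * U) := Ideal.mul_mono_left h1
    _ = Ideal.span {x} * T * U + Ideal.span {y} * U * T := by ring
    _ ≤ (J * T) * U + (J * U) * T :=
        add_le_add (Ideal.mul_mono_left hT) (Ideal.mul_mono_left hU)
    _ = J * (T * U) + J * (T * U) := by ring
    _ = J * (T * U) := by rw [Ideal.add_eq_sup, sup_idem]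

theorem hw_smul {J : Ideal A} (a : A) {x : A} (hx : HW J x) : HW J (a * x) := by
  obtain ⟨T, hc, hT⟩ := hx
  refine ⟨T, hc, le_trans (Ideal.mul_mono_left ?_) hT⟩
  exact (Ideal.span_singleton_le_iff_mem _).2 (Ideal.mem_span_singleton.2 (dvd_mul_left x a))

/-- The set of elements with a witness, as an ideal. -/
def C (J : Ideal A) : Ideal A where
  carrier := {x | HW J x}
  zero_mem' := hw_of_mem (zero_mem J)
  add_mem' := fun h1 h2 => hw_add h1 h2
  smul_mem' := fun a x hx => by simpa [smul_eq_mul] using hw_smul a hx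

theorem mem_C {J : Ideal A} {x : A} : x ∈ C J ↔ HW J x := Iff.rfl

theorem C_mul_le (J K : Ideal A) : C J * C K ≤ C (J * K) := by
  rw [Ideal.mul_le]
  intro x hx y hy
  obtain ⟨T, ⟨c, hcT, hc⟩, hT⟩ := hx
  obtain ⟨U, ⟨d, hdU, hd⟩, hU⟩ := hy
  refine ⟨T * U, ⟨c * d, Ideal.mul_mem_mul hcT hdU, mul_mem hc hd⟩, ?_⟩
  calc Ideal.span {x * y} * (T * U)
      = (Ideal.span {x} * T) * (Ideal.span {y} * U) := by
        rw [← Ideal.span_singleton_mul_span_singleton]; ring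
    _ ≤ (J * T) * (K * U) := Ideal.mul_mono hT hU
    _ = (J * K) * (T * U) := by ring

theorem C_pow_le (J : Ideal A) : ∀ i, C J ^ i ≤ C (J ^ i)
  | 0 => by
      rw [pow_zero, pow_zero, Ideal.one_eq_top]
      intro x _
      exact hw_of_mem Submodule.mem_top
  | (i + 1) => by
      rw [pow_succ, pow_succ]
      exact le_trans (Ideal.mul_mono (C_pow_le J i) le_rfl) (C_mul_le _ _)

theorem hw_of_equation {J : Ideal A} (hJ : ∃ c ∈ J, c ∈ nonZeroDivisors A) {x : A}
    {n : ℕ} (hn : 0 < n) {a : ℕ → A} (ha : ∀ i, 1 ≤ i → i ≤ n → HW (J ^ i) (a i))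
    (heq : x ^ n + ∑ i ∈ Finset.Icc 1 n, a i * x ^ (n - i) = 0) : HW J x := by
  classical
  obtain ⟨c, hcJ, hc⟩ := hJ
  choose! T hT using ha
  set S : Ideal A := Ideal.span {x} with hS
  set U : Ideal A := ∏ i ∈ Finset.Icc 1 n, T i with hU
  set D : Ideal A := ∑ j ∈ Finset.range n, J ^ (n - 1 - j) * S ^ j with hD
  have hUn : ∃ d ∈ U, d ∈ nonZeroDivisors A := by
    choose! cf h1 h2 using fun i hi1 hi2 => (hT i hi1 hi2).1
    refine ⟨∏ i ∈ Finset.Icc 1 n, cf i, Ideal.prod_mem_prod ?_, prod_mem ?_⟩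
    · intro i hi
      exact h1 i (Finset.mem_Icc.1 hi).1 (Finset.mem_Icc.1 hi).2
    · intro i hi
      exact h2 i (Finset.mem_Icc.1 hi).1 (Finset.mem_Icc.1 hi).2
  obtain ⟨d, hdU, hd⟩ := hUn
  have hJD : J ^ (n - 1) ≤ D := by
    have h0 : J ^ (n - 1) = J ^ (n - 1 - 0) * S ^ 0 := by
      rw [pow_zero, mul_one, Nat.sub_zero]
    rw [h0, hD, Ideal.sum_eq_sup]
    exact Finset.le_sup (f := fun j => J ^ (n - 1 - j) * S ^ j) (Finset.mem_range.2 hn)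
  refine ⟨D * U, ⟨c ^ (n - 1) * d, Ideal.mul_mem_mul (hJD (Ideal.pow_mem_pow hcJ _)) hdU,
    mul_mem (pow_mem hc _) hd⟩, ?_⟩
  have key : ∀ j ∈ Finset.range n, J ^ (n - 1 - j) * S ^ (j + 1) * U ≤ J * (D * U) := by
    intro j hj
    have hjn : j < n := Finset.mem_range.1 hj
    by_cases hcase : j + 1 < n
    · have he : n - 1 - j = (n - 1 - (j + 1)) + 1 := by omega
      have : J ^ (n - 1 - j) * S ^ (j + 1) * U
          = J * (J ^ (n - 1 - (j + 1)) * S ^ (j + 1) * U) := by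
        rw [he, pow_succ]; ring
      rw [this]
      refine Ideal.mul_mono_right (Ideal.mul_mono_left ?_)
      have : J ^ (n - 1 - (j + 1)) * S ^ (j + 1) ≤ D := by
        rw [hD, Ideal.sum_eq_sup]
        exact Finset.le_sup (f := fun j => J ^ (n - 1 - j) * S ^ j) (Finset.mem_range.2 hcase)
      exact this
    · have hj1 : j + 1 = n := by omega
      have hz : n - 1 - j = 0 := by omega
      rw [hz, pow_zero, one_mul, hj1]
      have hxn : x ^ n = -∑ i ∈ Finset.Icc 1 n, a i * x ^ (n - i) :=
        eq_neg_of_add_eq_zero_left heq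
      have hSn : S ^ n ≤ ∑ i ∈ Finset.Icc 1 n, Ideal.span {a i} * Ideal.span {x ^ (n - i)} := by
        rw [hS, Ideal.span_singleton_pow, Ideal.span_singleton_le_iff_mem, hxn]
        refine neg_mem (Submodule.sum_mem _ ?_)
        intro i hi
        have h1 : a i * x ^ (n - i) ∈ Ideal.span {a i} * Ideal.span {x ^ (n - i)} :=
          Ideal.mul_mem_mul (Ideal.subset_span rfl) (Ideal.subset_span rfl)
        have h2 : Ideal.span {a i} * Ideal.span {x ^ (n - i)}
            ≤ ∑ i ∈ Finset.Icc 1 n, Ideal.span {a i} * Ideal.span {x ^ (n - i)} := by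
          rw [Ideal.sum_eq_sup]
          exact Finset.le_sup (f := fun i => Ideal.span {a i} * Ideal.span {x ^ (n - i)}) hi
        exact h2 h1
      calc S ^ n * U
          ≤ (∑ i ∈ Finset.Icc 1 n, Ideal.span {a i} * Ideal.span {x ^ (n - i)}) * U :=
            Ideal.mul_mono_left hSn
        _ = ∑ i ∈ Finset.Icc 1 n, Ideal.span {a i} * Ideal.span {x ^ (n - i)} * U :=
            Finset.sum_mul _ _ _
        _ ≤ J * (D * U) := by
            rw [Ideal.sum_eq_sup]
            refine Finset.sup_le ?_
            intro i hi
            obtain ⟨hi1, hi2⟩ := Finset.mem_Icc.1 hi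
            obtain ⟨i', rfl⟩ : ∃ i', i = i' + 1 := ⟨i - 1, by omega⟩
            set i := i' + 1
            have hU' : U = T i * ∏ i' ∈ (Finset.Icc 1 n).erase i, T i' :=
              (Finset.mul_prod_erase _ _ hi).symm
            have hi' : J ^ i = J * J ^ i' := by
              rw [pow_succ]; ring
            have hDin : J ^ i' * S ^ (n - i) ≤ D := by
              rw [hD, Ideal.sum_eq_sup]
              have heq2 : J ^ i' * S ^ (n - i) = J ^ (n - 1 - (n - i)) * S ^ (n - i) := by
                rw [show n - 1 - (n - i) = i' by omega]
              rw [heq2]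
              exact Finset.le_sup (f := fun j => J ^ (n - 1 - j) * S ^ j)
                (Finset.mem_range.2 (by omega))
            calc Ideal.span {a i} * Ideal.span {x ^ (n - i)} * U
                = (Ideal.span {a i} * T i) *
                    (Ideal.span {x ^ (n - i)} * ∏ i' ∈ (Finset.Icc 1 n).erase i, T i') := by
                  rw [hU']; ring
              _ ≤ (J ^ i * T i) *
                    (Ideal.span {x ^ (n - i)} * ∏ i' ∈ (Finset.Icc 1 n).erase i, T i') :=
                  Ideal.mul_mono_left ((hT i hi1 hi2).2)
              _ = J * (J ^ i' * S ^ (n - i) * U) := by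
                  rw [hi', hU', hS, Ideal.span_singleton_pow]; ring
              _ ≤ J * (D * U) := Ideal.mul_mono_right (Ideal.mul_mono_left hDin)
  have hsum : S * (D * U) = ∑ j ∈ Finset.range n, J ^ (n - 1 - j) * S ^ (j + 1) * U := by
    rw [hD, Finset.sum_mul, Finset.mul_sum]
    refine Finset.sum_congr rfl ?_
    intro j _
    rw [pow_succ]; ring
  rw [← hS, hsum, Ideal.sum_eq_sup]
  exact Finset.sup_le key

theorem monic_eval_eq {q : Polynomial A} (hq : q.Monic) (x : A) :
    q.eval x = x ^ q.natDegree +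
      ∑ i ∈ Finset.Icc 1 q.natDegree, q.coeff (q.natDegree - i) * x ^ (q.natDegree - i) := by
  rw [Polynomial.eval_eq_sum_range, Finset.sum_range_succ, hq.coeff_natDegree, one_mul, add_comm]
  congr 1
  refine Finset.sum_nbij' (fun k => q.natDegree - k) (fun i => q.natDegree - i)
    ?_ ?_ ?_ ?_ ?_
  · intro k hk
    simp only [Finset.mem_Icc, Finset.mem_range] at *
    omega
  · intro i hi
    simp only [Finset.mem_Icc, Finset.mem_range] at *
    omega
  · intro k hk
    simp only [Finset.mem_range] at hk
    show q.natDegree - (q.natDegree - k) = k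
    omega
  · intro i hi
    simp only [Finset.mem_Icc] at hi
    show q.natDegree - (q.natDegree - i) = i
    omega
  · intro k hk
    simp only [Finset.mem_range] at hk
    show q.coeff k * x ^ k
        = q.coeff (q.natDegree - (q.natDegree - k)) * x ^ (q.natDegree - (q.natDegree - k))
    rw [show q.natDegree - (q.natDegree - k) = k by omega]

theorem hw_to_integral [IsNoetherianRing A] {J : Ideal A} {x : A} (h : HW J x) :
    IsIntegralOverIdeal J x := by
  rcases subsingleton_or_nontrivial A with hA | hA
  · exact ⟨1, one_pos, fun _ => 0, fun i _ _ => zero_mem _, Subsingleton.elim _ _⟩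
  obtain ⟨T, ⟨c, hcT, hc⟩, hle⟩ := h
  haveI : Module.Finite A T := Module.Finite.iff_fg.mpr (IsNoetherian.noetherian T)
  have hrange : LinearMap.range (algebraMap A (Module.End A T) x)
      ≤ J • (⊤ : Submodule A T) := by
    rintro _ ⟨t, rfl⟩
    rw [Submodule.mem_smul_top_iff, Ideal.smul_eq_mul]
    have h1 : ((algebraMap A (Module.End A T) x t : T) : A) = x * (t : A) := by
      rw [Module.algebraMap_end_apply]
      rfl
    rw [h1]
    exact hle (Ideal.mul_mem_mul (Ideal.subset_span rfl) t.2)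
  obtain ⟨p, hmonic, -, hcoeff, heval⟩ :=
    LinearMap.exists_monic_and_coeff_mem_pow_and_aeval_eq_zero_of_range_le_smul A
      (algebraMap A (Module.End A T) x) J hrange
  have hpx : p.eval x = 0 := by
    have h1 : algebraMap A (Module.End A T) (p.eval x) = 0 := by
      calc algebraMap A (Module.End A T) (p.eval x)
          = (Algebra.ofId A (Module.End A T)) (Polynomial.aeval x p) := by
            rw [Polynomial.coe_aeval_eq_eval]
            rfl
        _ = Polynomial.aeval ((Algebra.ofId A (Module.End A T)) x) p :=
            (Polynomial.aeval_algHom_apply _ x p).symm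
        _ = 0 := heval
    have h3 : p.eval x * c = 0 := by
      have h2 := congrArg (fun φ : Module.End A T => ((φ ⟨c, hcT⟩ : T) : A)) h1
      simpa [Module.algebraMap_end_apply, smul_eq_mul] using h2
    exact mem_nonZeroDivisors_iff_right.1 hc _ h3
  have hp0 : p ≠ 0 := hmonic.ne_zero
  set q := p * Polynomial.X with hqdef
  have hqm : q.Monic := hmonic.mul Polynomial.monic_X
  have hqd : q.natDegree = p.natDegree + 1 := Polynomial.natDegree_mul_X hp0
  have hqe : q.eval x = 0 := by
    rw [hqdef, Polynomial.eval_mul, Polynomial.eval_X, hpx, zero_mul]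
  have h4 : ∀ k, q.coeff k ∈ J ^ (q.natDegree - k) := by
    intro k
    cases k with
    | zero => rw [hqdef, Polynomial.coeff_mul_X_zero]; exact zero_mem _
    | succ j =>
        rw [hqdef, Polynomial.coeff_mul_X]
        have he : q.natDegree - (j + 1) = p.natDegree - j := by omega
        rw [he]
        exact hcoeff j
  refine ⟨q.natDegree, by omega, fun i => q.coeff (q.natDegree - i), ?_, ?_⟩
  · intro i h1 h2
    have h5 := h4 (q.natDegree - i)
    rwa [show q.natDegree - (q.natDegree - i) = i by omega] at h5
  · rw [← monic_eval_eq hqm x]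
    exact hqe

theorem le_intCl (J : Ideal A) : J ≤ intCl J := by
  intro x hx
  refine Ideal.subset_span ⟨1, one_pos, fun _ => -x, ?_, ?_⟩
  · intro i h1 h2
    have : i = 1 := le_antisymm h2 h1
    subst this
    rw [pow_one]
    exact neg_mem hx
  · simp

theorem intCl_mono {J K : Ideal A} (h : J ≤ K) : intCl J ≤ intCl K := by
  apply Ideal.span_mono
  rintro x ⟨n, hn, a, ha, heq⟩
  exact ⟨n, hn, a, fun i h1 h2 => Ideal.pow_right_mono h i (ha i h1 h2), heq⟩

theorem intCl_eq_C [IsNoetherianRing A] {J : Ideal A} (hJ : ∃ c ∈ J, c ∈ nonZeroDivisors A) :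
    intCl J = C J := by
  apply le_antisymm
  · rw [intCl, Ideal.span_le]
    rintro x ⟨n, hn, a, ha, heq⟩
    exact hw_of_equation hJ hn (fun i h1 h2 => hw_of_mem (ha i h1 h2)) heq
  · intro x hx
    exact Ideal.subset_span (hw_to_integral hx)

theorem exists_nzd_mul {J K : Ideal A} (hJ : ∃ c ∈ J, c ∈ nonZeroDivisors A)
    (hK : ∃ c ∈ K, c ∈ nonZeroDivisors A) : ∃ c ∈ J * K, c ∈ nonZeroDivisors A := by
  obtain ⟨c, h1, h2⟩ := hJ
  obtain ⟨d, h3, h4⟩ := hK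
  exact ⟨c * d, Ideal.mul_mem_mul h1 h3, mul_mem h2 h4⟩

theorem intCl_idem [IsNoetherianRing A] {J : Ideal A} (hJ : ∃ c ∈ J, c ∈ nonZeroDivisors A) :
    intCl (intCl J) = intCl J := by
  apply le_antisymm
  · rw [intCl_eq_C hJ]
    rw [intCl, Ideal.span_le]
    rintro x ⟨n, hn, a, ha, heq⟩
    exact hw_of_equation hJ hn (fun i h1 h2 => C_pow_le J i (ha i h1 h2)) heq
  · exact le_intCl _

theorem star_mul [IsNoetherianRing A] {J K : Ideal A}
    (hJ : ∃ c ∈ J, c ∈ nonZeroDivisors A) (hK : ∃ c ∈ K, c ∈ nonZeroDivisors A) :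
    intCl (intCl J * intCl K) = intCl (J * K) := by
  apply le_antisymm
  · have h1 : intCl J * intCl K ≤ intCl (J * K) := by
      rw [intCl_eq_C hJ, intCl_eq_C hK, intCl_eq_C (exists_nzd_mul hJ hK)]
      exact C_mul_le J K
    calc intCl (intCl J * intCl K) ≤ intCl (intCl (J * K)) := intCl_mono h1
      _ = intCl (J * K) := intCl_idem (exists_nzd_mul hJ hK)
  · exact intCl_mono (Ideal.mul_mono (le_intCl J) (le_intCl K))

theorem eq_top_of_le_intCl_mul [IsNoetherianRing A] {J K : Ideal A}
    (hJ : ∃ c ∈ J, c ∈ nonZeroDivisors A) (hK : ∃ c ∈ K, c ∈ nonZeroDivisors A)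
    (h : J ≤ intCl (J * K)) : K = ⊤ := by
  classical
  rw [intCl_eq_C (exists_nzd_mul hJ hK)] at h
  obtain ⟨s, hs⟩ := IsNoetherian.noetherian J
  have hTy : ∀ y ∈ s, ∃ T : Ideal A,
      (∃ c ∈ T, c ∈ nonZeroDivisors A) ∧ Ideal.span {y} * T ≤ (J * K) * T := by
    intro y hy
    exact h (hs ▸ Ideal.subset_span hy)
  choose! T hT1 hT2 using hTy
  set U : Ideal A := ∏ y ∈ s, T y with hU
  have hUn : ∃ u ∈ U, u ∈ nonZeroDivisors A := by
    choose! cf h1 h2 using hT1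
    exact ⟨∏ y ∈ s, cf y, Ideal.prod_mem_prod h1, prod_mem h2⟩
  have hle : J * U ≤ K • (J * U) := by
    rw [Ideal.smul_eq_mul, Ideal.mul_le]
    intro z hz u hu
    rw [← hs] at hz
    induction hz using Submodule.span_induction with
    | mem y hy =>
        have hU' : U = T y * ∏ y' ∈ s.erase y, T y' := (Finset.mul_prod_erase s T hy).symm
        have hyle : Ideal.span {y} * U ≤ K * (J * U) := by
          calc Ideal.span {y} * U
              = (Ideal.span {y} * T y) * ∏ y' ∈ s.erase y, T y' := by rw [hU']; ring
            _ ≤ ((J * K) * T y) * ∏ y' ∈ s.erase y, T y' := Ideal.mul_mono_left (hT2 y hy)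
            _ = K * (J * U) := by rw [hU']; ring
        exact hyle (Ideal.mul_mem_mul (Ideal.subset_span rfl) hu)
    | zero => rw [zero_mul]; exact zero_mem _
    | add z1 z2 h1' h2' ih1 ih2 => rw [add_mul]; exact add_mem ih1 ih2
    | smul a z hz' ih => rw [smul_eq_mul, mul_assoc]; exact Ideal.mul_mem_left _ a ih
  obtain ⟨r, hr1, hr0⟩ :=
    Submodule.exists_sub_one_mem_and_smul_eq_zero_of_fg_of_le_smul K (J * U)
      (IsNoetherian.noetherian _) hle
  obtain ⟨c, hcJ, hc⟩ := hJ
  obtain ⟨u, huU, hu⟩ := hUn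
  have hmul : r * (c * u) = 0 := by
    simpa [smul_eq_mul] using hr0 (c * u) (Ideal.mul_mem_mul hcJ huU)
  have hr : r = 0 := mem_nonZeroDivisors_iff_right.1 (mul_mem hc hu) _ hmul
  rw [Ideal.eq_top_iff_one]
  have hneg : -(1 : A) ∈ K := by
    rw [show -(1 : A) = r - 1 by rw [hr]; ring]
    exact hr1
  simpa using neg_mem hneg

end ICAux

open ICAux in
/-- `ic(A)` is atomic: every non-unit element factors into `*`-irreducibles. -/
theorem ic_atomic {A : Type*} [CommRing A] [IsNoetherianRing A] (I : Ideal A)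
    (hI : MemIC I) (hne : I ≠ ⊤) :
    ∃ k : ℕ, 1 ≤ k ∧ ∃ f : Fin k → Ideal A,
      (∀ i, StarIrreducible (f i)) ∧ I = intCl (∏ i, f i) := by
  revert hI hne
  refine IsNoetherian.induction (P := fun I : Ideal A => MemIC I → I ≠ ⊤ →
    ∃ k : ℕ, 1 ≤ k ∧ ∃ f : Fin k → Ideal A,
      (∀ i, StarIrreducible (f i)) ∧ I = intCl (∏ i, f i)) ?_ I
  intro I IH hI hne
  by_cases hirr : StarIrreducible I
  · refine ⟨1, le_refl 1, fun _ => I, fun _ => hirr, ?_⟩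
    have h1 : (∏ _i : Fin 1, I) = I := by simp
    rw [h1, hI.1]
  · have h3 : ¬ ∀ J K : Ideal A, MemIC J → MemIC K → I = intCl (J * K) → J = ⊤ ∨ K = ⊤ :=
      fun h => hirr ⟨hI, hne, h⟩
    push_neg at h3
    obtain ⟨J, K, hJ, hK, hIJK, hJt, hKt⟩ := h3
    have hIJ : I < J := by
      refine lt_of_le_of_ne ?_ ?_
      · rw [hIJK]
        exact le_trans (intCl_mono Ideal.mul_le_left) (le_of_eq hJ.1)
      · intro hEq
        exact hKt (eq_top_of_le_intCl_mul hJ.2 hK.2 (le_of_eq (hEq.symm.trans hIJK)))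
    have hIK : I < K := by
      refine lt_of_le_of_ne ?_ ?_
      · rw [hIJK]
        exact le_trans (intCl_mono Ideal.mul_le_right) (le_of_eq hK.1)
      · intro hEq
        have hKeq' : K = intCl (J * K) := hEq.symm.trans hIJK
        rw [mul_comm J K] at hKeq'
        exact hJt (eq_top_of_le_intCl_mul hK.2 hJ.2 (le_of_eq hKeq'))
    obtain ⟨k1, hk1, f, hf, hJeq⟩ := IH J hIJ hJ hJt
    obtain ⟨k2, hk2, g, hg, hKeq⟩ := IH K hIK hK hKt
    refine ⟨k1 + k2, by omega, Fin.append f g, ?_, ?_⟩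
    · intro i
      exact Fin.addCases (fun i0 => by rw [Fin.append_left]; exact hf i0)
        (fun i0 => by rw [Fin.append_right]; exact hg i0) i
    · have hprod : (∏ i, Fin.append f g i) = (∏ i, f i) * (∏ i, g i) := by
        rw [Fin.prod_univ_add]
        simp
      have hfn : ∃ c ∈ ∏ i, f i, c ∈ nonZeroDivisors A := by
        choose c hc1 hc2 using fun i => (hf i).1.2
        exact ⟨∏ i, c i, Ideal.prod_mem_prod (fun i _ => hc1 i), prod_mem (fun i _ => hc2 i)⟩
      have hgn : ∃ c ∈ ∏ i, g i, c ∈ nonZeroDivisors A := by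
        choose c hc1 hc2 using fun i => (hg i).1.2
        exact ⟨∏ i, c i, Ideal.prod_mem_prod (fun i _ => hc1 i), prod_mem (fun i _ => hc2 i)⟩
      rw [hprod, ← star_mul hfn hgn, ← hJeq, ← hKeq]
      exact hIJK
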